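/- Let τ ∈ (0,1) and define A_τ g(t) := g(((τ−1)/τ) t) for g : ℝ^d → ℂ. For f, g Schwartz functions on ℝ^d, the cross-τ-Wigner distribution W_τ(f,g)(x,ω) := ∫_{ℝ^d} e^{−2πi t·ω} f(x+τt) \overline{g(x−(1−τ)t)} dt satisfies W_τ(f,g)(x,ω) = τ^{−d} e^{2πi (1/τ) ω·x} V_{A_τ g} f(x/(1−τ), ω/τ), where V_h f(x,ω) := ∫ f(t) \overline{h(t−x)} e^{−2πi t·ω} dt is the short-time Fourier transform. -/

import Mathlib

open MeasureTheory Real Complex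
open scoped RealInnerProductSpace

noncomputable section

variable {d : ℕ}

/-- The short-time Fourier transform of f with respect to window h:
    V_h f(x,ω) = ∫ f(t) conj(h(t−x)) e^{−2πi t·ω} dt. -/
def STFT (h f : EuclideanSpace ℝ (Fin d) → ℂ) (x ω : EuclideanSpace ℝ (Fin d)) : ℂ :=
  ∫ t : EuclideanSpace ℝ (Fin d),
    f t * (starRingEnd ℂ) (h (t - x)) * Complex.exp (-2 * π * Complex.I * (⟪t, ω⟫ : ℝ))

/-- The cross-τ-Wigner distribution
    W_τ(f,g)(x,ω) = ∫ e^{−2πi t·ω} f(x+τt) conj(g(x−(1−τ)t)) dt. -/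
def crossWigner (τ : ℝ) (f g : EuclideanSpace ℝ (Fin d) → ℂ)
    (x ω : EuclideanSpace ℝ (Fin d)) : ℂ :=
  ∫ t : EuclideanSpace ℝ (Fin d),
    Complex.exp (-2 * π * Complex.I * (⟪t, ω⟫ : ℝ)) * f (x + τ • t)
      * (starRingEnd ℂ) (g (x - (1 - τ) • t))

/-- The dilation A_τ g(t) = g(((τ−1)/τ) t). -/
def dilA (τ : ℝ) (g : EuclideanSpace ℝ (Fin d) → ℂ) :
    EuclideanSpace ℝ (Fin d) → ℂ :=
  fun t => g (((τ - 1) / τ) • t)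

/-- For τ ∈ (0,1) and Schwartz functions f, g:
    W_τ(f,g)(x,ω) = τ^{−d} e^{2πi (1/τ) ω·x} V_{A_τ g} f(x/(1−τ), ω/τ). -/
theorem crossWigner_eq_STFT (τ : ℝ) (hτ0 : 0 < τ) (hτ1 : τ < 1)
    (f g : SchwartzMap (EuclideanSpace ℝ (Fin d)) ℂ)
    (x ω : EuclideanSpace ℝ (Fin d)) :
    crossWigner τ f g x ω
      = ((τ : ℂ) ^ d)⁻¹
        * Complex.exp (2 * π * Complex.I * ((1 / τ) * (⟪ω, x⟫ : ℝ) : ℝ))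
        * STFT (dilA τ g) f ((1 / (1 - τ)) • x) ((1 / τ) • ω) := by
  have hτ : (τ : ℝ) ≠ 0 := hτ0.ne'
  have h1τ : (1 : ℝ) - τ ≠ 0 := by linarith
  set e : ℂ := Complex.exp (2 * π * Complex.I * ((1 / τ) * (⟪ω, x⟫ : ℝ) : ℝ)) with he
  set H : EuclideanSpace ℝ (Fin d) → ℂ := fun s =>
    f s * (starRingEnd ℂ) (g (((τ - 1) / τ) • (s - (1 / (1 - τ)) • x)))
      * Complex.exp (-2 * π * Complex.I * (⟪s, (1 / τ) • ω⟫ : ℝ)) with hH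
  have hSTFT : STFT (dilA τ g) f ((1 / (1 - τ)) • x) ((1 / τ) • ω) = ∫ s, H s := rfl
  have h2 : (∫ s, H (x + s)) = ∫ s, H s :=
    MeasureTheory.integral_add_left_eq_self (fun s => H s) x
  have h1 : (∫ t, H (x + τ • t))
      = |(τ ^ (Module.finrank ℝ (EuclideanSpace ℝ (Fin d))))⁻¹| • ∫ s, H (x + s) :=
    MeasureTheory.Measure.integral_comp_smul volume (fun s => H (x + s)) τ
  have hscale : (∫ s, H s) = ((τ : ℂ) ^ d) * ∫ t, H (x + τ • t) := by
    rw [h1, h2, finrank_euclideanSpace_fin, abs_inv, abs_of_pos (pow_pos hτ0 d)]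
    rw [Complex.real_smul]
    push_cast
    rw [← mul_assoc, mul_inv_cancel₀ (pow_ne_zero _ (Complex.ofReal_ne_zero.2 hτ)), one_mul]
  rw [hSTFT, hscale]
  have hne : ((τ:ℂ)) ^ d ≠ 0 := pow_ne_zero _ (Complex.ofReal_ne_zero.2 hτ)
  have hI : ((τ:ℂ) ^ d)⁻¹ * e * ((τ:ℂ) ^ d * ∫ t, H (x + τ • t))
      = e * ∫ t, H (x + τ • t) := by
    field_simp
  rw [hI, ← MeasureTheory.integral_const_mul]
  unfold crossWigner
  congr 1
  funext t
  have harg : ((τ - 1) / τ) • ((x + τ • t) - (1 / (1 - τ)) • x) = x - (1 - τ) • t := by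
    match_scalars <;> field_simp <;> ring
  have hinner : (⟪x + τ • t, (1 / τ) • ω⟫ : ℝ) = (1 / τ) * ⟪x, ω⟫ + ⟪t, ω⟫ := by
    rw [inner_add_left, real_inner_smul_right, real_inner_smul_left, real_inner_smul_right]
    field_simp
  have hcomm : (⟪ω, x⟫ : ℝ) = ⟪x, ω⟫ := real_inner_comm x ω
  simp only [hH, harg, hinner, he, hcomm]
  rw [show (Complex.exp (2 * π * Complex.I * ((1 / τ) * (⟪x, ω⟫ : ℝ) : ℝ))
      * (f (x + τ • t) * (starRingEnd ℂ) (g (x - (1 - τ) • t))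
        * Complex.exp (-2 * π * Complex.I * (((1 / τ) * ⟪x, ω⟫ + ⟪t, ω⟫ : ℝ) : ℝ))))
    = (Complex.exp (2 * π * Complex.I * ((1 / τ) * (⟪x, ω⟫ : ℝ) : ℝ))
        * Complex.exp (-2 * π * Complex.I * (((1 / τ) * ⟪x, ω⟫ + ⟪t, ω⟫ : ℝ) : ℝ)))
      * (f (x + τ • t) * (starRingEnd ℂ) (g (x - (1 - τ) • t))) from by ring]
  rw [← Complex.exp_add]
  rw [show (2 * π * Complex.I * ((1 / τ) * (⟪x, ω⟫ : ℝ) : ℝ)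
      + -2 * π * Complex.I * (((1 / τ) * ⟪x, ω⟫ + ⟪t, ω⟫ : ℝ) : ℝ))
    = -2 * π * Complex.I * ((⟪t, ω⟫ : ℝ) : ℂ) from by push_cast; ring]
  ring

end
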